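/- arXiv:2210.17329 — 8 statements merged into one kernel-verified Lean document; each statement's English description precedes it below -/
import Mathlib

section
/- Define a_0' = a_1' = 1 and a_k' = k·a_{k−1}' + (k²−k)/2 · a_{k−2}' for k ≥ 2. Then a_k' = k! · a_k for all k ≥ 0, where a_k = ((1+√3)^{k+1} − (1−√3)^{k+1})/(2^{k+1}√3). -/
/-- The sequence `a_k = ((1+√3)^(k+1) − (1−√3)^(k+1)) / (2^(k+1)·√3)`. -/
noncomputable def aSeq (k : ℕ) : ℝ :=
  ((1 + Real.sqrt 3) ^ (k + 1) - (1 - Real.sqrt 3) ^ (k + 1)) /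
    (2 ^ (k + 1) * Real.sqrt 3)

lemma sqrt3_sq : Real.sqrt 3 ^ 2 = 3 := Real.sq_sqrt (by norm_num)

lemma sqrt3_pos : (0:ℝ) < Real.sqrt 3 := Real.sqrt_pos.mpr (by norm_num)

lemma aSeq_zero : aSeq 0 = 1 := by
  unfold aSeq
  have h := sqrt3_pos
  field_simp
  ring

lemma aSeq_one : aSeq 1 = 1 := by
  unfold aSeq
  have h := sqrt3_pos
  have hs := sqrt3_sq
  field_simp
  ring

lemma aSeq_rec (k : ℕ) : aSeq (k + 2) = aSeq (k + 1) + aSeq k / 2 := by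
  unfold aSeq
  have h := sqrt3_pos
  have hs := sqrt3_sq
  have h1 : (1 + Real.sqrt 3) ^ (k + 2 + 1) =
      (1 + Real.sqrt 3) ^ (k + 1) * (4 + 2 * Real.sqrt 3) := by
    have : (1 + Real.sqrt 3) ^ 2 = 4 + 2 * Real.sqrt 3 := by nlinarith [hs]
    rw [show k + 2 + 1 = k + 1 + 2 by ring, pow_add, this]
  have h2 : (1 - Real.sqrt 3) ^ (k + 2 + 1) =
      (1 - Real.sqrt 3) ^ (k + 1) * (4 - 2 * Real.sqrt 3) := by
    have : (1 - Real.sqrt 3) ^ 2 = 4 - 2 * Real.sqrt 3 := by nlinarith [hs]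
    rw [show k + 2 + 1 = k + 1 + 2 by ring, pow_add, this]
  have h3 : (1 + Real.sqrt 3) ^ (k + 1 + 1) =
      (1 + Real.sqrt 3) ^ (k + 1) * (1 + Real.sqrt 3) := by rw [pow_succ]
  have h4 : (1 - Real.sqrt 3) ^ (k + 1 + 1) =
      (1 - Real.sqrt 3) ^ (k + 1) * (1 - Real.sqrt 3) := by rw [pow_succ]
  rw [h1, h2, h3, h4]
  field_simp
  ring

theorem stmt_5 (a' : ℕ → ℝ) (h0 : a' 0 = 1) (h1 : a' 1 = 1)
    (hrec : ∀ k : ℕ, 2 ≤ k →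
      a' k = k * a' (k - 1) + ((k : ℝ) ^ 2 - k) / 2 * a' (k - 2)) :
    ∀ k : ℕ, a' k = Nat.factorial k * aSeq k := by
  have key : ∀ k : ℕ, a' k = Nat.factorial k * aSeq k ∧
      a' (k + 1) = Nat.factorial (k + 1) * aSeq (k + 1) := by
    intro k
    induction k with
    | zero =>
      constructor
      · simp [h0, aSeq_zero]
      · simp [h1, aSeq_one, Nat.factorial]
    | succ n ih =>
      refine ⟨ih.2, ?_⟩
      have hr := hrec (n + 2) (by omega)
      simp only [show n + 2 - 1 = n + 1 by omega, show n + 2 - 2 = n by omega] at hr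
      rw [hr, ih.1, ih.2, aSeq_rec n]
      have hf1 : (Nat.factorial (n + 2) : ℝ) = (n + 2) * Nat.factorial (n + 1) := by
        push_cast [Nat.factorial_succ]; ring
      have hf2 : (Nat.factorial (n + 2) : ℝ) = (n + 2) * (n + 1) * Nat.factorial n := by
        push_cast [Nat.factorial_succ]; ring
      have hf : ((n + 1).factorial : ℝ) = (n + 1) * n.factorial := by
        push_cast [Nat.factorial_succ]; ring
      rw [hf2, hf]
      push_cast
      ring
  exact fun k => (key k).1
end

section
/- Let τ_0 = 1 and τ_k = Σ_{j=0}^{k−1} (k−j+1)·τ_j for k ≥ 1. Then for k ≥ 1, τ_k = ((2+√2)^{k+1} − (2−√2)^{k+1})/(4√2). -/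
lemma stmt_6_key (s : ℝ) (hs : s ^ 2 = 2) (n : ℕ) :
    (2 + s) ^ (n + 3) - (2 - s) ^ (n + 3) =
      4 * ((2 + s) ^ (n + 2) - (2 - s) ^ (n + 2)) -
        2 * ((2 + s) ^ (n + 1) - (2 - s) ^ (n + 1)) := by
  have h1 : (2 + s) ^ 2 = 4 * (2 + s) - 2 := by linear_combination hs
  have h2 : (2 - s) ^ 2 = 4 * (2 - s) - 2 := by linear_combination hs
  linear_combination (2 + s) ^ (n + 1) * h1 - (2 - s) ^ (n + 1) * h2

theorem stmt_6 (τ : ℕ → ℝ) (h0 : τ 0 = 1)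
    (hrec : ∀ k : ℕ, 1 ≤ k →
      τ k = ∑ j ∈ Finset.range k, ((k : ℝ) - j + 1) * τ j) :
    ∀ k : ℕ, 1 ≤ k →
      τ k = ((2 + Real.sqrt 2) ^ (k + 1) - (2 - Real.sqrt 2) ^ (k + 1)) /
        (4 * Real.sqrt 2) := by
  set s := Real.sqrt 2 with hsdef
  have hs2 : s ^ 2 = 2 := Real.sq_sqrt (by norm_num)
  have hspos : (0 : ℝ) < s := Real.sqrt_pos.mpr (by norm_num)
  have hne : (4 : ℝ) * s ≠ 0 := by positivity
  have h1 : τ 1 = 2 := by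
    rw [hrec 1 le_rfl, Finset.sum_range_one, h0]; norm_num
  have h2 : τ 2 = 7 := by
    rw [hrec 2 (by norm_num), Finset.sum_range_succ, Finset.sum_range_one, h0, h1]
    norm_num
  have hS : ∀ k, 1 ≤ k → τ (k + 1) = 3 * τ k + ∑ j ∈ Finset.range k, τ j := by
    intro k hk
    rw [hrec (k + 1) (by omega), Finset.sum_range_succ]
    have hcongr : ∑ j ∈ Finset.range k, (((k : ℕ) + 1 : ℝ) - j + 1) * τ j
        = ∑ j ∈ Finset.range k, (((k : ℝ) - j + 1) * τ j + τ j) := by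
      apply Finset.sum_congr rfl
      intro j _; ring
    push_cast
    rw [hcongr, Finset.sum_add_distrib, ← hrec k hk]
    ring
  have hrec2 : ∀ k, 1 ≤ k → τ (k + 2) = 4 * τ (k + 1) - 2 * τ k := by
    intro k hk
    have a := hS k hk
    have b := hS (k + 1) (by omega)
    rw [Finset.sum_range_succ] at b
    have : τ (k + 1 + 1) = τ (k + 2) := by ring_nf
    linarith [b, a]
  have hf : ∀ k, 1 ≤ k →
      τ k = ((2 + s) ^ (k + 1) - (2 - s) ^ (k + 1)) / (4 * s) ∧
      τ (k + 1) = ((2 + s) ^ (k + 2) - (2 - s) ^ (k + 2)) / (4 * s) := by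
    intro k hk
    induction k, hk using Nat.le_induction with
    | base =>
      constructor
      · rw [h1, eq_div_iff hne]; ring
      · rw [h2, eq_div_iff hne]
        linear_combination (-2 * s) * hs2
    | succ n hn ih =>
      obtain ⟨ihn, ihn1⟩ := ih
      refine ⟨ihn1, ?_⟩
      have e : n + 1 + 1 = n + 2 := rfl
      rw [show n + 1 + 1 = n + 2 from rfl, hrec2 n hn, ihn, ihn1,
        show n + 1 + 2 = n + 3 from rfl, stmt_6_key s hs2 n]
      ring
  intro k hk
  exact (hf k hk).1
end

section
/- Let τ_0 = 1 and τ_k = Σ_{j=0}^{k−1} (k−j+1)·τ_j for k ≥ 1. Then τ_k ≤ (2+√2)^k for all k ≥ 0. -/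
lemma key_sum (k : ℕ) :
    ∑ j ∈ Finset.range k, ((k : ℝ) - j + 1) * (2 + Real.sqrt 2) ^ j
      = (2 + Real.sqrt 2) ^ k - 1 - k * (Real.sqrt 2 - 1) := by
  have hs : Real.sqrt 2 ^ 2 = 2 := Real.sq_sqrt (by norm_num)
  have hs0 : (0:ℝ) ≤ Real.sqrt 2 := Real.sqrt_nonneg 2
  have hs1 : (1:ℝ) ≤ Real.sqrt 2 := by
    nlinarith [hs]
  induction k with
  | zero => simp
  | succ k ih =>
    have hgeom : ∑ j ∈ Finset.range k, (2 + Real.sqrt 2) ^ j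
        = ((2 + Real.sqrt 2) ^ k - 1) / (2 + Real.sqrt 2 - 1) := by
      apply geom_sum_eq
      intro h
      nlinarith [hs1]
    have hsplit : ∑ j ∈ Finset.range (k+1), (((k:ℕ)+1 : ℝ) - j + 1) * (2 + Real.sqrt 2) ^ j
        = (∑ j ∈ Finset.range k, ((k : ℝ) - j + 1) * (2 + Real.sqrt 2) ^ j)
          + (∑ j ∈ Finset.range k, (2 + Real.sqrt 2) ^ j)
          + 2 * (2 + Real.sqrt 2) ^ k := by
      rw [Finset.sum_range_succ, ← Finset.sum_add_distrib]
      push_cast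
      rw [Finset.sum_congr rfl (fun x _ => by ring :
        ∀ x ∈ Finset.range k, ((k:ℝ) + 1 - x + 1) * (2 + Real.sqrt 2) ^ x
          = ((k:ℝ) - x + 1) * (2 + Real.sqrt 2) ^ x + (2 + Real.sqrt 2) ^ x)]
      ring
    push_cast
    rw [hsplit, ih, hgeom]
    have hne : (2 + Real.sqrt 2 - 1) ≠ 0 := by nlinarith [hs1]
    field_simp
    linear_combination (1 - (2 + Real.sqrt 2) ^ k) * hs

theorem stmt_7 (τ : ℕ → ℝ) (h0 : τ 0 = 1)
    (hrec : ∀ k : ℕ, 1 ≤ k →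
      τ k = ∑ j ∈ Finset.range k, ((k : ℝ) - j + 1) * τ j) :
    ∀ k : ℕ, τ k ≤ (2 + Real.sqrt 2) ^ k := by
  have hs1 : (1:ℝ) ≤ Real.sqrt 2 := by
    nlinarith [Real.sq_sqrt (show (0:ℝ) ≤ 2 by norm_num), Real.sqrt_nonneg 2]
  intro k
  induction k using Nat.strong_induction_on with
  | _ k ih =>
    rcases Nat.eq_zero_or_pos k with hk | hk
    · subst hk; simp [h0]
    · rw [hrec k hk]
      have hbound : ∑ j ∈ Finset.range k, ((k : ℝ) - j + 1) * τ j
          ≤ ∑ j ∈ Finset.range k, ((k : ℝ) - j + 1) * (2 + Real.sqrt 2) ^ j := by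
        apply Finset.sum_le_sum
        intro j hj
        have hjk : j < k := Finset.mem_range.mp hj
        have hcoef : (0:ℝ) ≤ (k : ℝ) - j + 1 := by
          have : (j:ℝ) ≤ k := by exact_mod_cast hjk.le
          linarith
        exact mul_le_mul_of_nonneg_left (ih j hjk) hcoef
      calc ∑ j ∈ Finset.range k, ((k : ℝ) - j + 1) * τ j
          ≤ ∑ j ∈ Finset.range k, ((k : ℝ) - j + 1) * (2 + Real.sqrt 2) ^ j := hbound
        _ = (2 + Real.sqrt 2) ^ k - 1 - k * (Real.sqrt 2 - 1) := key_sum k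
        _ ≤ (2 + Real.sqrt 2) ^ k := by
            have : (0:ℝ) ≤ (k:ℝ) * (Real.sqrt 2 - 1) := by
              apply mul_nonneg (Nat.cast_nonneg k); linarith
            linarith
end

section
/- Let 0 < p ≤ q < ∞ and let (a_i)_{i≥1} be a sequence of real numbers with |a_1| ≥ |a_2| ≥ ⋯ and Σ_{i≥1} |a_i|^p < ∞. Then for every s ≥ 1, (Σ_{i>s} |a_i|^q)^{1/q} ≤ (Σ_{i≥1} |a_i|^p)^{1/p} · s^{−1/p+1/q}. -/
/-- Stechkin's lemma. The sequence `a` is indexed so that `a i` corresponds to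
`a_{i+1}` in the usual `1`-based indexing; thus `∑' i, |a (s + i)| ^ q` is the
tail sum `Σ_{i > s} |a_i|^q`. -/
theorem stmt_8 (p q : ℝ) (hp : 0 < p) (hpq : p ≤ q) (a : ℕ → ℝ)
    (hmono : ∀ i : ℕ, |a (i + 1)| ≤ |a i|)
    (hsum : Summable fun i : ℕ => |a i| ^ p)
    (s : ℕ) (hs : 1 ≤ s) :
    (∑' i : ℕ, |a (s + i)| ^ q) ^ (1 / q) ≤
      (∑' i : ℕ, |a i| ^ p) ^ (1 / p) * (s : ℝ) ^ (-1 / p + 1 / q) := by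
  have hq : 0 < q := hp.trans_le hpq
  have hsR : (0:ℝ) < s := by exact_mod_cast hs
  set A := ∑' i : ℕ, |a i| ^ p with hAdef
  have hA0 : 0 ≤ A := tsum_nonneg fun i => Real.rpow_nonneg (abs_nonneg _) _
  have hanti : Antitone fun i => |a i| := antitone_nat_of_succ_le fun n => hmono n
  have hinj : Function.Injective fun i : ℕ => s + i := fun i j h => by
    simpa using h
  have hsum_tail : Summable fun i : ℕ => |a (s + i)| ^ p :=
    hsum.comp_injective hinj
  -- s * |a s|^p ≤ A
  have h1 : (s:ℝ) * |a s| ^ p ≤ A := by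
    calc (s:ℝ) * |a s| ^ p = ∑ k ∈ Finset.range s, |a s| ^ p := by
          rw [Finset.sum_const, Finset.card_range, nsmul_eq_mul]
      _ ≤ ∑ k ∈ Finset.range s, |a k| ^ p := by
          refine Finset.sum_le_sum fun k hk => ?_
          exact Real.rpow_le_rpow (abs_nonneg _) (hanti (Finset.mem_range.mp hk).le) hp.le
      _ ≤ A := Summable.sum_le_tsum _ (fun i _ => Real.rpow_nonneg (abs_nonneg _) _) hsum
  have h2 : |a s| ^ p ≤ A / s := (le_div_iff₀' hsR).mpr h1
  rcases hA0.eq_or_lt with hAz | hApos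
  · -- A = 0 : all tail terms vanish
    have hzero : ∀ i : ℕ, |a (s + i)| ^ q = 0 := by
      intro i
      have h3 : |a s| ^ p ≤ 0 := by
        rw [← hAz] at h2
        simpa using h2
      have h4 : |a s| = 0 := by
        by_contra h
        have habs : 0 < |a s| := (abs_nonneg _).lt_of_ne (Ne.symm h)
        exact absurd h3 (not_le.mpr (Real.rpow_pos_of_pos habs p))
      have h5 : |a (s + i)| = 0 :=
        le_antisymm (h4 ▸ hanti (Nat.le_add_right s i)) (abs_nonneg _)
      rw [h5, Real.zero_rpow hq.ne']
    rw [tsum_congr hzero, tsum_zero, Real.zero_rpow (by positivity)]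
    positivity
  · -- A > 0
    have hterm : ∀ i : ℕ, |a (s + i)| ^ q ≤ |a s| ^ (q - p) * |a (s + i)| ^ p := by
      intro i
      rcases (abs_nonneg (a (s + i))).eq_or_lt with hz | hpos
      · rw [← hz, Real.zero_rpow hq.ne', Real.zero_rpow hp.ne', mul_zero]
      · have : |a (s + i)| ^ q = |a (s + i)| ^ (q - p) * |a (s + i)| ^ p := by
          rw [← Real.rpow_add hpos]; ring_nf
        rw [this]
        refine mul_le_mul_of_nonneg_right ?_ (Real.rpow_nonneg (abs_nonneg _) _)
        exact Real.rpow_le_rpow (abs_nonneg _) (hanti (Nat.le_add_right s i))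
          (sub_nonneg.mpr hpq)
    have hsum_q : Summable fun i : ℕ => |a (s + i)| ^ q :=
      Summable.of_nonneg_of_le (fun i => Real.rpow_nonneg (abs_nonneg _) _) hterm
        (hsum_tail.mul_left _)
    have htail_le : (∑' i : ℕ, |a (s + i)| ^ p) ≤ A := by
      refine Summable.tsum_le_tsum_of_inj (fun i : ℕ => s + i) hinj
        (fun c _ => Real.rpow_nonneg (abs_nonneg _) _) (fun n => le_rfl) hsum_tail hsum
    have hT : (∑' i : ℕ, |a (s + i)| ^ q) ≤ |a s| ^ (q - p) * A := by
      calc (∑' i : ℕ, |a (s + i)| ^ q)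
          ≤ ∑' i : ℕ, |a s| ^ (q - p) * |a (s + i)| ^ p :=
            Summable.tsum_le_tsum hterm hsum_q (hsum_tail.mul_left _)
        _ = |a s| ^ (q - p) * ∑' i : ℕ, |a (s + i)| ^ p := tsum_mul_left
        _ ≤ |a s| ^ (q - p) * A :=
            mul_le_mul_of_nonneg_left htail_le (Real.rpow_nonneg (abs_nonneg _) _)
    have has : |a s| ≤ (A / s) ^ (1 / p) := by
      have := Real.rpow_le_rpow (Real.rpow_nonneg (abs_nonneg _) p) h2
        (by positivity : (0:ℝ) ≤ 1 / p)
      rw [← Real.rpow_mul (abs_nonneg _), one_div, mul_inv_cancel₀ hp.ne',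
        Real.rpow_one] at this
      simpa [one_div] using this
    have hASpos : 0 < A / s := div_pos hApos hsR
    have hT2 : (∑' i : ℕ, |a (s + i)| ^ q) ≤ (A / s) ^ ((q - p) / p) * A := by
      refine hT.trans (mul_le_mul_of_nonneg_right ?_ hA0)
      calc |a s| ^ (q - p) ≤ ((A / s) ^ (1 / p)) ^ (q - p) :=
            Real.rpow_le_rpow (abs_nonneg _) has (sub_nonneg.mpr hpq)
        _ = (A / s) ^ ((q - p) / p) := by
            rw [← Real.rpow_mul hASpos.le]
            congr 1; field_simp
    have hfinal :
        ((A / s) ^ ((q - p) / p) * A) ^ (1 / q) = A ^ (1 / p) * (s : ℝ) ^ (-1 / p + 1 / q) := by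
      rw [Real.div_rpow hA0 hsR.le, div_mul_eq_mul_div, ← Real.rpow_add_one hApos.ne',
        Real.div_rpow (by positivity) (by positivity),
        ← Real.rpow_mul hA0, ← Real.rpow_mul hsR.le]
      have e1 : ((q - p) / p + 1) * (1 / q) = 1 / p := by field_simp; ring
      have e2 : (q - p) / p * (1 / q) = -(-1 / p + 1 / q) := by field_simp; ring
      rw [e1, e2, Real.rpow_neg hsR.le, div_eq_mul_inv, inv_inv]
    calc (∑' i : ℕ, |a (s + i)| ^ q) ^ (1 / q)
        ≤ ((A / s) ^ ((q - p) / p) * A) ^ (1 / q) :=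
          Real.rpow_le_rpow (tsum_nonneg fun i => Real.rpow_nonneg (abs_nonneg _) _)
            hT2 (by positivity)
      _ = A ^ (1 / p) * (s : ℝ) ^ (-1 / p + 1 / q) := hfinal
end

section
/- For any finitely supported multi-index m with nonnegative integer entries, Σ_{w ≤ m} C(m,w) · |w|! · |m−w|! = (|m|+1)!, where C(m,w) is the product of componentwise binomial coefficients and |w| is the sum of entries of w. -/
/-- Order (total degree) of a finitely supported multi-index. -/
def deg (m : ℕ →₀ ℕ) : ℕ := m.sum fun _ k => k

/-- Multivariate binomial coefficient `C(m, w) = Π_i C(m_i, w_i)`. -/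
def mchoose (m w : ℕ →₀ ℕ) : ℕ := ∏ i ∈ m.support, (m i).choose (w i)

lemma deg_add (u v : ℕ →₀ ℕ) : deg (u + v) = deg u + deg v := by
  unfold deg; exact Finsupp.sum_add_index' (fun _ => rfl) (fun _ _ _ => rfl)

lemma deg_single (a n : ℕ) : deg (Finsupp.single a n) = n := by
  unfold deg; exact Finsupp.sum_single_index rfl

lemma deg_sub {w m : ℕ →₀ ℕ} (h : w ≤ m) : deg w + deg (m - w) = deg m := by
  rw [← deg_add, add_tsub_cancel_of_le h]

lemma sum_Iic_single_add {a n : ℕ} (f : ℕ →₀ ℕ) (haf : f a = 0) (F : (ℕ →₀ ℕ) → ℕ) :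
    ∑ w ∈ Finset.Iic (Finsupp.single a n + f), F w
      = ∑ p ∈ (Finset.range (n+1)) ×ˢ Finset.Iic f, F (Finsupp.single a p.1 + p.2) := by
  refine Finset.sum_nbij' (fun w => (w a, w.erase a)) (fun p => Finsupp.single a p.1 + p.2)
    ?_ ?_ ?_ ?_ ?_
  · intro w hw
    rw [Finset.mem_Iic] at hw
    have h1 : w a ≤ n := by
      have := hw a
      simpa [haf] using this
    have h2 : w.erase a ≤ f := by
      intro i
      by_cases hia : i = a
      · subst hia; simp [Finsupp.erase_apply]
      · have := hw i
        simpa [Finsupp.erase_apply, hia, Finsupp.single_apply, Ne.symm hia] using this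
    simp [Finset.mem_product, Finset.mem_range, Nat.lt_succ_iff, h1, h2]
  · intro p hp
    rw [Finset.mem_product, Finset.mem_range, Nat.lt_succ_iff] at hp
    have hp2 : p.2 a = 0 := Nat.le_zero.mp (haf ▸ Finset.mem_Iic.mp hp.2 a)
    rw [Finset.mem_Iic]
    intro i
    by_cases hia : i = a
    · subst hia; simp [hp2, hp.1, haf]
    · have := Finset.mem_Iic.mp hp.2 i
      simpa [Finsupp.single_apply, Ne.symm hia] using this
  · intro w _
    exact Finsupp.single_add_erase a w
  · intro p hp
    rw [Finset.mem_product] at hp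
    have hp2 : p.2 a = 0 := Nat.le_zero.mp (haf ▸ Finset.mem_Iic.mp hp.2 a)
    ext1
    · simp [hp2]
    · ext i
      by_cases hia : i = a
      · subst hia; simp [Finsupp.erase_apply, hp2]
      · simp [Finsupp.erase_apply, hia, Finsupp.single_apply, Ne.symm hia]
  · intro w _
    rw [Finsupp.single_add_erase a w]

lemma mchoose_single_add {a n : ℕ} (f v : ℕ →₀ ℕ) (haf : a ∉ f.support) (hn : n ≠ 0)
    (hv : v ≤ f) (j : ℕ) :
    mchoose (Finsupp.single a n + f) (Finsupp.single a j + v)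
      = n.choose j * mchoose f v := by
  have haf' : f a = 0 := Finsupp.notMem_support_iff.mp haf
  have hva : v a = 0 := Nat.le_zero.mp (haf' ▸ hv a)
  have hsupp : (Finsupp.single a n + f).support = {a} ∪ f.support := by
    rw [Finsupp.support_add_eq, Finsupp.support_single_ne_zero a hn]
    rw [Finsupp.support_single_ne_zero a hn]
    simpa using haf
  unfold mchoose
  rw [hsupp, Finset.prod_union (by simpa using haf), Finset.prod_singleton]
  congr 1
  · simp [haf', hva]
  · apply Finset.prod_congr rfl
    intro i hi
    have hia : i ≠ a := fun h => haf (h ▸ hi)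
    simp [Finsupp.single_apply, Ne.symm hia]

lemma key (m : ℕ →₀ ℕ) : ∀ k, ∑ w ∈ Finset.Iic m,
    (if deg w = k then mchoose m w else 0) = (deg m).choose k := by
  induction m using Finsupp.induction with
  | zero =>
      intro k
      have h0 : (Finset.Iic (0:ℕ→₀ℕ)) = {0} := by
        ext w; simp [nonpos_iff_eq_zero]
      rw [h0]
      simp only [Finset.sum_singleton]
      have : deg 0 = 0 := rfl
      cases k <;> simp [this, mchoose]
  | single_add a n f haf hn ih =>
      intro k
      have haf' : f a = 0 := Finsupp.notMem_support_iff.mp haf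
      rw [sum_Iic_single_add f haf', Finset.sum_product]
      have hstep : ∀ j ∈ Finset.range (n+1),
          (∑ v ∈ Finset.Iic f,
            if deg (Finsupp.single a j + v) = k
              then mchoose (Finsupp.single a n + f) (Finsupp.single a j + v) else 0)
          = if j ≤ k then n.choose j * (deg f).choose (k - j) else 0 := by
        intro j _
        have hterm : ∀ v ∈ Finset.Iic f,
            (if deg (Finsupp.single a j + v) = k
              then mchoose (Finsupp.single a n + f) (Finsupp.single a j + v) else 0)
            = if j ≤ k ∧ deg v = k - j then n.choose j * mchoose f v else 0 := by
          intro v hv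
          rw [deg_add, deg_single, mchoose_single_add f v haf hn (Finset.mem_Iic.mp hv)]
          exact if_congr (by omega) rfl rfl
        rw [Finset.sum_congr rfl hterm]
        by_cases hjk : j ≤ k
        · rw [if_pos hjk, ← ih (k - j), Finset.mul_sum]
          apply Finset.sum_congr rfl
          intro v _
          rw [mul_ite, mul_zero]
          exact if_congr (by tauto) rfl rfl
        · rw [if_neg hjk]
          apply Finset.sum_eq_zero
          intro v _
          rw [if_neg (by tauto)]
      rw [Finset.sum_congr rfl hstep, deg_add, deg_single, Nat.add_choose_eq,
        Finset.Nat.sum_antidiagonal_eq_sum_range_succ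
          (f := fun p q => n.choose p * (deg f).choose q)]
      have e2 : (∑ j ∈ Finset.range (n+1),
            if j ≤ k then n.choose j * (deg f).choose (k - j) else 0)
          = ∑ j ∈ Finset.range (n+k+1),
            if j ≤ k then n.choose j * (deg f).choose (k - j) else 0 :=
        Finset.sum_subset (Finset.range_subset_range.mpr (by omega)) (fun j _ hj => by
          rw [Finset.mem_range, not_lt] at hj
          rw [Nat.choose_eq_zero_of_lt (show n < j by omega)]
          simp)
      have e3 : (∑ j ∈ Finset.range (k+1), n.choose j * (deg f).choose (k - j))
          = ∑ j ∈ Finset.range (n+k+1),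
            if j ≤ k then n.choose j * (deg f).choose (k - j) else 0 := by
        rw [Finset.sum_congr rfl (fun j hj =>
          (if_pos (show j ≤ k by rw [Finset.mem_range] at hj; omega)).symm)]
        exact Finset.sum_subset (Finset.range_subset_range.mpr (by omega)) (fun j _ hj => by
          rw [Finset.mem_range, not_lt] at hj; rw [if_neg (by omega)])
      rw [e2, e3]

theorem stmt_10 (m : ℕ →₀ ℕ) :
    ∑ w ∈ Finset.Iic m,
        mchoose m w * Nat.factorial (deg w) * Nat.factorial (deg (m - w))
      = Nat.factorial (deg m + 1) := by
  set N := deg m with hN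
  have step1 : ∀ w ∈ Finset.Iic m,
      mchoose m w * Nat.factorial (deg w) * Nat.factorial (deg (m - w))
        = ∑ k ∈ Finset.range (N+1),
            if deg w = k then mchoose m w * Nat.factorial k * Nat.factorial (N - k) else 0 := by
    intro w hw
    have hle : w ≤ m := Finset.mem_Iic.mp hw
    have hdd : deg w + deg (m - w) = N := deg_sub hle
    rw [Finset.sum_ite_eq (Finset.range (N+1)) (deg w)
      (fun k => mchoose m w * Nat.factorial k * Nat.factorial (N - k))]
    rw [if_pos (Finset.mem_range.mpr (by omega))]
    congr 2
    omega
  rw [Finset.sum_congr rfl step1, Finset.sum_comm]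
  have step2 : ∀ k ∈ Finset.range (N+1),
      (∑ w ∈ Finset.Iic m,
        if deg w = k then mchoose m w * Nat.factorial k * Nat.factorial (N - k) else 0)
      = Nat.factorial N := by
    intro k hk
    rw [Finset.mem_range] at hk
    have : (∑ w ∈ Finset.Iic m,
        if deg w = k then mchoose m w * Nat.factorial k * Nat.factorial (N - k) else 0)
      = (∑ w ∈ Finset.Iic m, if deg w = k then mchoose m w else 0)
          * Nat.factorial k * Nat.factorial (N - k) := by
      rw [Finset.sum_mul, Finset.sum_mul]
      apply Finset.sum_congr rfl
      intro w _
      split <;> simp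
    rw [this, key m k, hN]
    exact Nat.choose_mul_factorial_mul_factorial (by omega)
  rw [Finset.sum_congr rfl step2, Finset.sum_const, Finset.card_range]
  rw [Nat.factorial_succ]
  ring
end

section
/- Define P_0 = 1 (for the zero multi-index) and, for finitely supported multi-indices m ≠ 0, P_m = (|m|+d)!/(m!·d!) + Σ_{w ≤ m, w ≠ m} P_w · (|m|−|w|+1)!, where m! = Π_i m_i!. Then P_m ≤ 2·τ_{|m|}·(|m|+d−1)!/(d−1)! for all m ≠ 0, where τ_0 = 1, τ_k = Σ_{j=0}^{k−1}(k−j+1)τ_j. -/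
def mfact (m : ℕ →₀ ℕ) : ℕ := ∏ i ∈ m.support, (m i).factorial

lemma deg_eq_card (m : ℕ →₀ ℕ) : deg m = Multiset.card (Finsupp.toMultiset m) := by
  rw [Finsupp.card_toMultiset]; rfl

lemma deg_zero : deg 0 = 0 := by simp [deg]

lemma eq_zero_of_deg_eq_zero {m : ℕ →₀ ℕ} (h : deg m = 0) : m = 0 := by
  rw [deg_eq_card, Multiset.card_eq_zero] at h
  have := Finsupp.orderIsoMultiset.injective (a₁ := m) (a₂ := 0)
  simp only [Finsupp.coe_orderIsoMultiset] at this
  exact this (by simp [h, Finsupp.toMultiset_zero])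

lemma deg_lt_of_lt {w m : ℕ →₀ ℕ} (h : w ≤ m) (hne : w ≠ m) : deg w < deg m := by
  rw [deg_eq_card, deg_eq_card]
  exact Multiset.card_lt_card (Finsupp.toMultiset_strictMono (lt_of_le_of_ne h hne))

lemma one_le_mfact (m : ℕ →₀ ℕ) : 1 ≤ mfact m :=
  Finset.one_le_prod' fun _ _ => Nat.one_le_iff_ne_zero.mpr (Nat.factorial_ne_zero _)

lemma card_fiber_le (m : ℕ →₀ ℕ) (j : ℕ) :
    (((Finset.Iic m).erase m).filter (fun w => deg w = j)).card ≤ (deg m).choose j := by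
  classical
  set F := ((Finset.Iic m).erase m).filter (fun w => deg w = j) with hF
  have hinj : Set.InjOn Finsupp.toMultiset (F : Set (ℕ →₀ ℕ)) := by
    intro a _ b _ h
    have := Finsupp.orderIsoMultiset.injective (a₁ := a) (a₂ := b)
    simp only [Finsupp.coe_orderIsoMultiset] at this
    exact this h
  have hsub : F.image Finsupp.toMultiset ⊆
      (Multiset.powersetCard j (Finsupp.toMultiset m)).toFinset := by
    intro x hx
    rcases Finset.mem_image.mp hx with ⟨w, hw, rfl⟩
    rcases Finset.mem_filter.mp hw with ⟨hw1, hw2⟩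
    have hle : w ≤ m := Finset.mem_Iic.mp (Finset.mem_of_mem_erase hw1)
    rw [Multiset.mem_toFinset, Multiset.mem_powersetCard]
    exact ⟨Finsupp.toMultiset_strictMono.monotone hle, by rw [← deg_eq_card]; exact hw2⟩
  calc F.card = (F.image Finsupp.toMultiset).card := (Finset.card_image_of_injOn hinj).symm
    _ ≤ (Multiset.powersetCard j (Finsupp.toMultiset m)).toFinset.card :=
        Finset.card_le_card hsub
    _ ≤ Multiset.card (Multiset.powersetCard j (Finsupp.toMultiset m)) :=
        Multiset.toFinset_card_le _
    _ = (deg m).choose j := by rw [Multiset.card_powersetCard, deg_eq_card]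

lemma nat_core (d k j : ℕ) (hd : 1 ≤ d) (hj : j ≤ k) :
    k.choose j * (j + d - 1).factorial * (k - j + 1).factorial
      ≤ (k - j + 1) * (k + d - 1).factorial := by
  have h1 : k.choose j ≤ (k + d - 1).choose (k - j) := by
    rw [← Nat.choose_symm hj]
    exact Nat.choose_le_choose _ (by omega)
  have h2 : (k + d - 1).choose (k - j) * (k - j).factorial * (j + d - 1).factorial
      = (k + d - 1).factorial := by
    have h := Nat.choose_mul_factorial_mul_factorial (show k - j ≤ k + d - 1 by omega)
    rwa [show k + d - 1 - (k - j) = j + d - 1 by omega] at h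
  calc k.choose j * (j + d - 1).factorial * (k - j + 1).factorial
      = (k - j + 1) * (k.choose j * (k - j).factorial * (j + d - 1).factorial) := by
        rw [Nat.factorial_succ]; ring
    _ ≤ (k - j + 1) * ((k + d - 1).choose (k - j) * (k - j).factorial * (j + d - 1).factorial) :=
        Nat.mul_le_mul_left _ (Nat.mul_le_mul_right _ (Nat.mul_le_mul_right _ h1))
    _ = (k - j + 1) * (k + d - 1).factorial := by rw [h2]

lemma base_nat_a (d k : ℕ) (hd : 1 ≤ d) :
    (k + d).factorial * (d - 1).factorial ≤ (k + 1) * (k + d - 1).factorial * d.factorial := by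
  obtain ⟨e, rfl⟩ : ∃ e, d = e + 1 := ⟨d - 1, by omega⟩
  have h1 : k + (e + 1) = (k + e) + 1 := by omega
  rw [h1]
  have h2 : k + e + 1 - 1 = k + e := by omega
  have h3 : e + 1 - 1 = e := by omega
  rw [h2, h3, Nat.factorial_succ, Nat.factorial_succ]
  have hm : k + e + 1 ≤ (k + 1) * (e + 1) := by nlinarith
  calc (k + e + 1) * (k + e).factorial * e.factorial
      ≤ ((k + 1) * (e + 1)) * (k + e).factorial * e.factorial :=
        Nat.mul_le_mul_right _ (Nat.mul_le_mul_right _ hm)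
    _ = (k + 1) * (k + e).factorial * ((e + 1) * e.factorial) := by ring

lemma base_nat_b (d k : ℕ) (hd : 1 ≤ d) :
    (k + 1).factorial * (d - 1).factorial ≤ (k + 1) * (k + d - 1).factorial := by
  have h1 : k.factorial * (d - 1).factorial ≤ (k + d - 1).factorial := by
    have := Nat.factorial_mul_factorial_dvd_factorial_add k (d - 1)
    rw [show k + (d - 1) = k + d - 1 by omega] at this
    exact Nat.le_of_dvd (Nat.factorial_pos _) this
  calc (k + 1).factorial * (d - 1).factorial
      = (k + 1) * (k.factorial * (d - 1).factorial) := by rw [Nat.factorial_succ]; ring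
    _ ≤ (k + 1) * (k + d - 1).factorial := Nat.mul_le_mul_left _ h1

lemma base_ineq (d k : ℕ) (hd : 1 ≤ d) :
    ((k + d).factorial : ℝ) / (d.factorial : ℝ) + ((k + 1).factorial : ℝ)
      ≤ 2 * ((k + 1 : ℕ) : ℝ) * ((k + d - 1).factorial : ℝ) / ((d - 1).factorial : ℝ) := by
  have hB : (0 : ℝ) < ((d - 1).factorial : ℝ) := by positivity
  have hD : (0 : ℝ) < (d.factorial : ℝ) := by positivity
  have ha : ((k + d).factorial : ℝ) / (d.factorial : ℝ)
      ≤ ((k + 1 : ℕ) : ℝ) * ((k + d - 1).factorial : ℝ) / ((d - 1).factorial : ℝ) := by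
    rw [div_le_div_iff₀ hD hB]
    exact_mod_cast base_nat_a d k hd
  have hb : ((k + 1).factorial : ℝ)
      ≤ ((k + 1 : ℕ) : ℝ) * ((k + d - 1).factorial : ℝ) / ((d - 1).factorial : ℝ) := by
    rw [le_div_iff₀ hB]
    exact_mod_cast base_nat_b d k hd
  calc ((k + d).factorial : ℝ) / (d.factorial : ℝ) + ((k + 1).factorial : ℝ)
      ≤ ((k + 1 : ℕ) : ℝ) * ((k + d - 1).factorial : ℝ) / ((d - 1).factorial : ℝ)
        + ((k + 1 : ℕ) : ℝ) * ((k + d - 1).factorial : ℝ) / ((d - 1).factorial : ℝ) :=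
        add_le_add ha hb
    _ = 2 * ((k + 1 : ℕ) : ℝ) * ((k + d - 1).factorial : ℝ) / ((d - 1).factorial : ℝ) := by
        ring

theorem stmt_14 (d : ℕ) (hd : 1 ≤ d)
    (τ : ℕ → ℕ) (hτ0 : τ 0 = 1)
    (hτrec : ∀ k : ℕ, 1 ≤ k → τ k = ∑ j ∈ Finset.range k, (k - j + 1) * τ j)
    (P : (ℕ →₀ ℕ) → ℝ) (hP0 : P 0 = 1)
    (hPrec : ∀ m : ℕ →₀ ℕ, m ≠ 0 →
      P m = (Nat.factorial (deg m + d) : ℝ) / (mfact m * Nat.factorial d) +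
        ∑ w ∈ (Finset.Iic m).erase m,
          P w * Nat.factorial (deg m - deg w + 1)) :
    ∀ m : ℕ →₀ ℕ, m ≠ 0 →
      P m ≤ 2 * τ (deg m) * Nat.factorial (deg m + d - 1) /
        Nat.factorial (d - 1) := by
  classical
  have hB : (0 : ℝ) < ((d - 1).factorial : ℝ) := by positivity
  suffices H : ∀ k : ℕ, ∀ m : ℕ →₀ ℕ, m ≠ 0 → deg m = k →
      P m ≤ 2 * τ k * Nat.factorial (k + d - 1) / Nat.factorial (d - 1) by
    intro m hm
    exact H (deg m) m hm rfl
  intro k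
  induction k using Nat.strong_induction_on with
  | _ k IH =>
  intro m hm hdm
  have hk1 : 1 ≤ k := by
    rcases Nat.eq_zero_or_pos k with h | h
    · exact absurd (eq_zero_of_deg_eq_zero (by rw [hdm, h])) hm
    · exact h
  set G : ℕ → ℝ := fun j => if j = 0 then 1 else
      2 * (τ j : ℝ) * ((j + d - 1).factorial : ℝ) / ((d - 1).factorial : ℝ) with hG
  have hGnn : ∀ j, 0 ≤ G j := by
    intro j; rw [hG]; dsimp only; split <;> positivity
  set S := (Finset.Iic m).erase m with hS
  -- bound P w by G (deg w)
  have hPw : ∀ w ∈ S, P w * (((k - deg w + 1).factorial : ℕ) : ℝ)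
      ≤ G (deg w) * (((k - deg w + 1).factorial : ℕ) : ℝ) := by
    intro w hw
    have hle : w ≤ m := Finset.mem_Iic.mp (Finset.mem_of_mem_erase hw)
    have hne : w ≠ m := Finset.ne_of_mem_erase hw
    have hdw : deg w < k := hdm ▸ deg_lt_of_lt hle hne
    apply mul_le_mul_of_nonneg_right _ (by positivity)
    by_cases h0 : w = 0
    · subst h0; rw [hP0, hG]; simp [deg_zero]
    · have hdw0 : deg w ≠ 0 := fun h => h0 (eq_zero_of_deg_eq_zero h)
      have hIH := IH (deg w) hdw w h0 rfl
      rw [hG]; dsimp only; rw [if_neg hdw0]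
      exact hIH
  have hmaps : ∀ w ∈ S, deg w ∈ Finset.range k := by
    intro w hw
    exact Finset.mem_range.mpr (hdm ▸ deg_lt_of_lt
      (Finset.mem_Iic.mp (Finset.mem_of_mem_erase hw)) (Finset.ne_of_mem_erase hw))
  have hfib : ∑ w ∈ S, G (deg w) * (((k - deg w + 1).factorial : ℕ) : ℝ)
      = ∑ j ∈ Finset.range k, ∑ w ∈ S.filter (fun w => deg w = j),
          G (deg w) * (((k - deg w + 1).factorial : ℕ) : ℝ) :=
    (Finset.sum_fiberwise_of_maps_to hmaps _).symm
  have hfib2 : ∀ j ∈ Finset.range k,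
      ∑ w ∈ S.filter (fun w => deg w = j),
          G (deg w) * (((k - deg w + 1).factorial : ℕ) : ℝ)
        ≤ (k.choose j : ℝ) * (G j * (((k - j + 1).factorial : ℕ) : ℝ)) := by
    intro j _
    have hcard : (S.filter (fun w => deg w = j)).card ≤ k.choose j := by
      rw [← hdm]; exact card_fiber_le m j
    calc ∑ w ∈ S.filter (fun w => deg w = j),
            G (deg w) * (((k - deg w + 1).factorial : ℕ) : ℝ)
        = ∑ _w ∈ S.filter (fun w => deg w = j),
            G j * (((k - j + 1).factorial : ℕ) : ℝ) := by
          refine Finset.sum_congr rfl fun w hw => ?_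
          rw [(Finset.mem_filter.mp hw).2]
      _ = ((S.filter (fun w => deg w = j)).card : ℝ)
            * (G j * (((k - j + 1).factorial : ℕ) : ℝ)) := by
          rw [Finset.sum_const, nsmul_eq_mul]
      _ ≤ (k.choose j : ℝ) * (G j * (((k - j + 1).factorial : ℕ) : ℝ)) := by
          apply mul_le_mul_of_nonneg_right
          · exact_mod_cast hcard
          · have := hGnn j; positivity
  -- first term bound
  have hmf : (1 : ℝ) ≤ (mfact m : ℝ) := by exact_mod_cast one_le_mfact m
  have hT1 : ((k + d).factorial : ℝ) / ((mfact m : ℝ) * (d.factorial : ℝ))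
      ≤ ((k + d).factorial : ℝ) / (d.factorial : ℝ) := by
    apply div_le_div_of_nonneg_left (by positivity) (by positivity)
    exact le_mul_of_one_le_left (by positivity) hmf
  -- RHS expansion
  have hRHS : 2 * (τ k : ℝ) * ((k + d - 1).factorial : ℝ) / ((d - 1).factorial : ℝ)
      = ∑ j ∈ Finset.range k,
          2 * ((k - j + 1 : ℕ) : ℝ) * (τ j : ℝ) * ((k + d - 1).factorial : ℝ)
            / ((d - 1).factorial : ℝ) := by
    rw [hτrec k hk1]
    push_cast
    rw [Finset.mul_sum, Finset.sum_mul, Finset.sum_div]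
    refine Finset.sum_congr rfl fun j _ => ?_
    ring
  -- termwise bound for j ≥ 1
  have hterm : ∀ j, 1 ≤ j → j ≤ k →
      (k.choose j : ℝ) * (G j * (((k - j + 1).factorial : ℕ) : ℝ))
        ≤ 2 * ((k - j + 1 : ℕ) : ℝ) * (τ j : ℝ) * ((k + d - 1).factorial : ℝ)
            / ((d - 1).factorial : ℝ) := by
    intro j hj1 hjk
    have hnat : k.choose j * (2 * τ j * ((j + d - 1).factorial * (k - j + 1).factorial))
        ≤ 2 * (k - j + 1) * τ j * (k + d - 1).factorial := by
      calc k.choose j * (2 * τ j * ((j + d - 1).factorial * (k - j + 1).factorial))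
          = 2 * τ j * (k.choose j * (j + d - 1).factorial * (k - j + 1).factorial) := by ring
        _ ≤ 2 * τ j * ((k - j + 1) * (k + d - 1).factorial) :=
            Nat.mul_le_mul_left _ (nat_core d k j hd hjk)
        _ = 2 * (k - j + 1) * τ j * (k + d - 1).factorial := by ring
    have hGj : G j = 2 * (τ j : ℝ) * ((j + d - 1).factorial : ℝ) / ((d - 1).factorial : ℝ) := by
      rw [hG]; dsimp only; rw [if_neg (by omega)]
    rw [hGj]
    rw [show (k.choose j : ℝ) * (2 * (τ j : ℝ) * ((j + d - 1).factorial : ℝ)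
          / ((d - 1).factorial : ℝ) * (((k - j + 1).factorial : ℕ) : ℝ))
        = ((k.choose j * (2 * τ j * ((j + d - 1).factorial * (k - j + 1).factorial)) : ℕ) : ℝ)
          / ((d - 1).factorial : ℝ) by push_cast; ring,
      show 2 * ((k - j + 1 : ℕ) : ℝ) * (τ j : ℝ) * ((k + d - 1).factorial : ℝ)
          / ((d - 1).factorial : ℝ)
        = ((2 * (k - j + 1) * τ j * (k + d - 1).factorial : ℕ) : ℝ)
          / ((d - 1).factorial : ℝ) by push_cast; ring]
    exact div_le_div_of_nonneg_right (by exact_mod_cast hnat) hB.le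
  -- assemble
  rw [hPrec m hm, hdm]
  calc ((k + d).factorial : ℝ) / ((mfact m : ℝ) * (d.factorial : ℝ))
        + ∑ w ∈ S, P w * (((k - deg w + 1).factorial : ℕ) : ℝ)
      ≤ ((k + d).factorial : ℝ) / (d.factorial : ℝ)
        + ∑ j ∈ Finset.range k, (k.choose j : ℝ) * (G j * (((k - j + 1).factorial : ℕ) : ℝ)) := by
        refine add_le_add hT1 ?_
        refine (Finset.sum_le_sum hPw).trans ?_
        rw [hfib]
        exact Finset.sum_le_sum hfib2
    _ ≤ 2 * (τ k : ℝ) * ((k + d - 1).factorial : ℝ) / ((d - 1).factorial : ℝ) := by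
        rw [hRHS]
        obtain ⟨k', rfl⟩ : ∃ k', k = k' + 1 := ⟨k - 1, by omega⟩
        rw [Finset.sum_range_succ' (fun j =>
            ((k' + 1).choose j : ℝ) * (G j * (((k' + 1 - j + 1).factorial : ℕ) : ℝ))) k',
          Finset.sum_range_succ' (fun j =>
            2 * ((k' + 1 - j + 1 : ℕ) : ℝ) * (τ j : ℝ) * (((k' + 1) + d - 1).factorial : ℝ)
              / ((d - 1).factorial : ℝ)) k']
        have h1 : ∑ i ∈ Finset.range k',
              ((k' + 1).choose (i + 1) : ℝ)
                * (G (i + 1) * (((k' + 1 - (i + 1) + 1).factorial : ℕ) : ℝ))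
            ≤ ∑ i ∈ Finset.range k',
              2 * ((k' + 1 - (i + 1) + 1 : ℕ) : ℝ) * (τ (i + 1) : ℝ)
                * (((k' + 1) + d - 1).factorial : ℝ) / ((d - 1).factorial : ℝ) := by
          refine Finset.sum_le_sum fun i hi => ?_
          have hik : i + 1 ≤ k' + 1 := by
            have := Finset.mem_range.mp hi; omega
          exact hterm (i + 1) (by omega) hik
        have h2 : (((k' + 1) + d).factorial : ℝ) / (d.factorial : ℝ)
              + ((k' + 1).choose 0 : ℝ) * (G 0 * (((k' + 1 - 0 + 1).factorial : ℕ) : ℝ))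
            ≤ 2 * ((k' + 1 - 0 + 1 : ℕ) : ℝ) * (τ 0 : ℝ) * (((k' + 1) + d - 1).factorial : ℝ)
              / ((d - 1).factorial : ℝ) := by
          have hb := base_ineq d (k' + 1) hd
          have hG0 : G 0 = 1 := by simp [hG]
          simp only [Nat.choose_zero_right, Nat.cast_one, hG0, one_mul, mul_one,
            Nat.sub_zero, hτ0]
          exact hb
        linarith [h1, h2]
end

section
/- For k,ℓ ∈ ℕ the two-dimensional Delannoy-type number D_2(k·e_i + ℓ·e_j) (with i ≠ j), defined by D_2(0)=1 and D_2(m) = Σ_{u ⊆ supp(m), 1 ≤ |u| ≤ 2} D_2(m − e_u), equals Σ_{t=0}^{min(k,ℓ)} 2^t · C(k,t) · C(ℓ,t). -/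
open Finset

/-- The multi-index `e_u = Σ_{j ∈ u} e_j`. -/
noncomputable def eU (u : Finset ℕ) : ℕ →₀ ℕ := ∑ j ∈ u, Finsupp.single j 1

private def F (k l : ℕ) : ℕ := ∑ t ∈ Finset.range (k+1), 2^t * k.choose t * l.choose t

private lemma F_eq (k l N : ℕ) (h : k < N) :
    F k l = ∑ t ∈ Finset.range N, 2^t * k.choose t * l.choose t := by
  apply Finset.sum_subset (Finset.range_subset_range.2 h)
  intro x _ hx
  rw [Nat.choose_eq_zero_of_lt (by simpa using hx)]
  ring

private lemma F_min (k l : ℕ) :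
    F k l = ∑ t ∈ Finset.range (min k l + 1), 2^t * k.choose t * l.choose t := by
  unfold F
  symm
  apply Finset.sum_subset (Finset.range_subset_range.2 (by omega))
  intro x _ hx
  simp only [Finset.mem_range] at hx
  rcases le_or_gt x k with h | h
  · rw [Nat.choose_eq_zero_of_lt (n := l) (by omega)]; ring
  · rw [Nat.choose_eq_zero_of_lt h]; ring

private lemma F_zero_left (l : ℕ) : F 0 l = 1 := by simp [F]

private lemma F_zero_right (k : ℕ) : F k 0 = 1 := by
  rw [F_min]; simp

private lemma key_s16 (k l : ℕ) : F (k+1) (l+1) = F k (l+1) + F (k+1) l + F k l := by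
  set N := k + l + 2 with hN
  set Sa := ∑ t ∈ Finset.range N, 2^t * k.choose t * l.choose t with hSa
  set SA := ∑ t ∈ Finset.range N, 2^(t+1) * k.choose t * l.choose (t+1) with hSA
  set SB := ∑ t ∈ Finset.range N, 2^(t+1) * k.choose (t+1) * l.choose t with hSB
  set SC := ∑ t ∈ Finset.range N, 2^(t+1) * k.choose (t+1) * l.choose (t+1) with hSC
  have h1 : F (k+1) (l+1) = 2 * Sa + SA + SB + SC + 1 := by
    rw [F_eq (k+1) (l+1) (N+1) (by omega),
      Finset.sum_range_succ' (fun t => 2^t * (k+1).choose t * (l+1).choose t) N]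
    have hterm : ∀ t ∈ Finset.range N,
        2^(t+1) * (k+1).choose (t+1) * (l+1).choose (t+1)
        = 2 * (2^t * k.choose t * l.choose t)
          + 2^(t+1) * k.choose t * l.choose (t+1)
          + 2^(t+1) * k.choose (t+1) * l.choose t
          + 2^(t+1) * k.choose (t+1) * l.choose (t+1) := by
      intro t _
      rw [Nat.choose_succ_succ (k) t, Nat.choose_succ_succ (l) t]
      ring
    rw [Finset.sum_congr rfl hterm, Finset.sum_add_distrib, Finset.sum_add_distrib,
      Finset.sum_add_distrib, ← Finset.mul_sum]
    simp; rfl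
  have h2 : F k (l+1) = SB + SC + 1 := by
    rw [F_eq k (l+1) (N+1) (by omega),
      Finset.sum_range_succ' (fun t => 2^t * k.choose t * (l+1).choose t) N]
    have hterm : ∀ t ∈ Finset.range N,
        2^(t+1) * k.choose (t+1) * (l+1).choose (t+1)
        = 2^(t+1) * k.choose (t+1) * l.choose t
          + 2^(t+1) * k.choose (t+1) * l.choose (t+1) := by
      intro t _
      rw [Nat.choose_succ_succ (l) t]
      ring
    rw [Finset.sum_congr rfl hterm, Finset.sum_add_distrib]
    simp; rfl
  have h3 : F (k+1) l = SA + SC + 1 := by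
    rw [F_eq (k+1) l (N+1) (by omega),
      Finset.sum_range_succ' (fun t => 2^t * (k+1).choose t * l.choose t) N]
    have hterm : ∀ t ∈ Finset.range N,
        2^(t+1) * (k+1).choose (t+1) * l.choose (t+1)
        = 2^(t+1) * k.choose t * l.choose (t+1)
          + 2^(t+1) * k.choose (t+1) * l.choose (t+1) := by
      intro t _
      rw [Nat.choose_succ_succ (k) t]
      ring
    rw [Finset.sum_congr rfl hterm, Finset.sum_add_distrib]
    simp; rfl
  have h4 : Sa = SC + 1 := by
    have := F_eq k l N (by omega)
    rw [F_eq k l (N+1) (by omega),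
      Finset.sum_range_succ' (fun t => 2^t * k.choose t * l.choose t) N] at this
    simp only [pow_zero, Nat.choose_zero_right, mul_one, pow_succ] at this ⊢
    rw [hSa, ← this, hSC]
    exact congrArg (fun x => x + 1) (Finset.sum_congr rfl (fun t _ => by ring))
  have h5 : F k l = Sa := F_eq k l N (by omega)
  omega

private lemma eU_single (a : ℕ) : eU {a} = Finsupp.single a 1 := by
  simp [eU]

private lemma eU_pair (a b : ℕ) (h : a ≠ b) :
    eU {a, b} = Finsupp.single a 1 + Finsupp.single b 1 := by
  rw [eU, Finset.sum_pair h]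

private lemma filter_singleton_pow (a : ℕ) :
    (Finset.powerset ({a} : Finset ℕ)).filter (fun u => 1 ≤ u.card ∧ u.card ≤ 2)
      = {{a}} := by
  ext u
  simp only [Finset.mem_filter, Finset.mem_powerset, Finset.subset_singleton_iff,
    Finset.mem_singleton]
  constructor
  · rintro ⟨rfl | rfl, h1, h2⟩
    · simp at h1
    · rfl
  · rintro rfl
    simp

private lemma filter_pair_pow (a b : ℕ) (hab : a ≠ b) :
    (Finset.powerset ({a, b} : Finset ℕ)).filter (fun u => 1 ≤ u.card ∧ u.card ≤ 2)
      = {{a}, {b}, ({a, b} : Finset ℕ)} := by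
  ext u
  simp only [Finset.mem_filter, Finset.mem_powerset, Finset.mem_insert, Finset.mem_singleton]
  constructor
  · rintro ⟨hsub, h1, _⟩
    have hmem : ∀ x ∈ u, x = a ∨ x = b := by
      intro x hx
      have := hsub hx
      simpa using this
    by_cases ha : a ∈ u <;> by_cases hb : b ∈ u
    · right; right
      apply Finset.Subset.antisymm hsub
      intro x hx
      simp only [Finset.mem_insert, Finset.mem_singleton] at hx
      rcases hx with rfl | rfl <;> assumption
    · left
      apply Finset.eq_singleton_iff_unique_mem.2
      refine ⟨ha, fun x hx => ?_⟩
      rcases hmem x hx with rfl | rfl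
      · rfl
      · exact absurd hx hb
    · right; left
      apply Finset.eq_singleton_iff_unique_mem.2
      refine ⟨hb, fun x hx => ?_⟩
      rcases hmem x hx with rfl | rfl
      · exact absurd hx ha
      · rfl
    · exfalso
      have : u = ∅ := by
        apply Finset.eq_empty_iff_forall_notMem.2
        intro x hx
        rcases hmem x hx with rfl | rfl
        · exact ha hx
        · exact hb hx
      rw [this] at h1; simp at h1
  · rintro (rfl | rfl | rfl)
    · exact ⟨by simp, by simp⟩
    · exact ⟨by simp, by simp⟩
    · exact ⟨Finset.Subset.refl _, by simp [Finset.card_pair hab]⟩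

theorem stmt_16 (D : (ℕ →₀ ℕ) → ℕ) (hD0 : D 0 = 1)
    (hDrec : ∀ m : ℕ →₀ ℕ, m ≠ 0 →
      D m = ∑ u ∈ m.support.powerset.filter (fun u => 1 ≤ u.card ∧ u.card ≤ 2),
        D (m - eU u))
    (i j : ℕ) (hij : i ≠ j) (k ℓ : ℕ) :
    D (Finsupp.single i k + Finsupp.single j ℓ)
      = ∑ t ∈ Finset.range (min k ℓ + 1), 2 ^ t * Nat.choose k t * Nat.choose ℓ t := by
  rw [← F_min]
  have H : ∀ n : ℕ, ∀ k l : ℕ, k + l ≤ n →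
      D (Finsupp.single i k + Finsupp.single j l) = F k l := by
    intro n
    induction n with
    | zero =>
      intro k l h
      obtain ⟨rfl, rfl⟩ : k = 0 ∧ l = 0 := by omega
      simp only [Finsupp.single_zero, add_zero, hD0, F_zero_left]
    | succ n ih =>
      intro k l h
      rcases k with _ | k <;> rcases l with _ | l
      · simp only [Finsupp.single_zero, add_zero, hD0, F_zero_left]
      · -- k = 0, l+1
        simp only [Finsupp.single_zero, zero_add]
        rw [hDrec _ (by simp), Finsupp.support_single_ne_zero j (by omega),
          filter_singleton_pow, Finset.sum_singleton, eU_single,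
          ← Finsupp.single_tsub]
        have := ih 0 l (by omega)
        simp only [Finsupp.single_zero, zero_add] at this
        simp only [Nat.add_sub_cancel, this, F_zero_left]
      · -- k+1, l = 0
        simp only [Finsupp.single_zero, add_zero]
        rw [hDrec _ (by simp), Finsupp.support_single_ne_zero i (by omega),
          filter_singleton_pow, Finset.sum_singleton, eU_single,
          ← Finsupp.single_tsub]
        have := ih k 0 (by omega)
        simp only [Finsupp.single_zero, add_zero] at this
        simp only [Nat.add_sub_cancel, this, F_zero_right]
      · -- k+1, l+1
        set m := Finsupp.single i (k+1) + Finsupp.single j (l+1) with hm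
        have hmne : m ≠ 0 := by
          intro h0
          have h2 := DFunLike.congr_fun h0 j
          simp [hm, Finsupp.add_apply, Finsupp.single_apply, hij] at h2
        have hsupp : m.support = {i, j} := by
          rw [hm, Finsupp.support_add_eq, Finsupp.support_single_ne_zero i (by omega),
            Finsupp.support_single_ne_zero j (by omega)]
          · rfl
          · rw [Finsupp.support_single_ne_zero i (by omega),
              Finsupp.support_single_ne_zero j (by omega)]
            simp only [Finset.disjoint_singleton]
            exact hij
        have hA1 : m - eU {i} = Finsupp.single i k + Finsupp.single j (l+1) := by
          rw [eU_single, hm, show Finsupp.single i (k+1)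
              = Finsupp.single i k + Finsupp.single i 1 by
            rw [← Finsupp.single_add]]
          rw [add_right_comm, add_tsub_cancel_right]
        have hA2 : m - eU {j} = Finsupp.single i (k+1) + Finsupp.single j l := by
          rw [eU_single, hm, show Finsupp.single j (l+1)
              = Finsupp.single j l + Finsupp.single j 1 by
            rw [← Finsupp.single_add]]
          rw [← add_assoc, add_tsub_cancel_right]
        have hA3 : m - eU {i, j} = Finsupp.single i k + Finsupp.single j l := by
          rw [eU_pair i j hij, hm, show Finsupp.single i (k+1)
              = Finsupp.single i k + Finsupp.single i 1 by
            rw [← Finsupp.single_add], show Finsupp.single j (l+1)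
              = Finsupp.single j l + Finsupp.single j 1 by
            rw [← Finsupp.single_add]]
          rw [show Finsupp.single i k + Finsupp.single i 1
              + (Finsupp.single j l + Finsupp.single j 1)
              = (Finsupp.single i k + Finsupp.single j l)
                + (Finsupp.single i 1 + Finsupp.single j 1) by abel,
            add_tsub_cancel_right]
        have hne1 : ({i} : Finset ℕ) ≠ {j} := by simpa using hij
        have hne2 : ({i} : Finset ℕ) ≠ {i, j} := by
          intro h0
          have : (1 : ℕ) = 2 := by
            rw [← Finset.card_singleton i, h0, Finset.card_pair hij]
          omega
        have hne3 : ({j} : Finset ℕ) ≠ {i, j} := by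
          intro h0
          have : (1 : ℕ) = 2 := by
            rw [← Finset.card_singleton j, h0, Finset.card_pair hij]
          omega
        rw [hDrec m hmne, hsupp, filter_pair_pow i j hij,
          Finset.sum_insert (by simp [hne1, hne2]),
          Finset.sum_insert (by simp [hne3]), Finset.sum_singleton,
          hA1, hA2, hA3, ih k (l+1) (by omega), ih (k+1) l (by omega),
          ih k l (by omega), key_s16 k l]
        ring
  exact H (k + ℓ) k ℓ le_rfl
end

section
/- Let A, B : F → ℝ be arbitrary functions on the set F of finitely supported multi-indices, and let ν ∈ F. Then Σ_{m ≤ ν} Σ_{w ≤ m} Σ_{μ ≤ ν−m} C(ν,m)·A(w)·B(μ)·Π_i S(m_i,w_i)·S(ν_i−m_i,μ_i) = Σ_{m ≤ ν} (Σ_{w ≤ m} C(m,w)·A(w)·B(m−w)) · Π_i S(ν_i,m_i). -/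
/-- Stirling numbers of the second kind. -/
def stirling : ℕ → ℕ → ℕ
  | 0, 0 => 1
  | 0, _ + 1 => 0
  | _ + 1, 0 => 0
  | n + 1, m + 1 => (m + 1) * stirling n (m + 1) + stirling n m

open Finset

lemma stirling_eq_zero : ∀ {n m : ℕ}, n < m → stirling n m = 0 := by
  intro n
  induction n with
  | zero => intro m h; match m, h with | m+1, _ => rfl
  | succ n ih =>
    intro m h
    match m, h with
    | m+1, h =>
      have h1 : n < m + 1 := by omega
      have h2 : n < m := by omega
      simp [stirling, ih h1, ih h2]

lemma key_s17 (n : ℕ) : ∀ a b : ℕ,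
    (∑ k ∈ range (n+1), n.choose k * (stirling k a * stirling (n-k) b))
      = (a+b).choose a * stirling n (a+b) := by
  induction n with
  | zero =>
    intro a b
    rw [Finset.sum_range_one]
    rcases Nat.eq_zero_or_pos (a+b) with h|h
    · obtain ⟨rfl, rfl⟩ : a = 0 ∧ b = 0 := by omega
      rfl
    · have hz : stirling 0 a * stirling 0 b = 0 := by
        rcases Nat.eq_zero_or_pos a with rfl|ha
        · rw [stirling_eq_zero (by omega : 0 < b), mul_zero]
        · rw [stirling_eq_zero ha, zero_mul]
      have h00 : (0:ℕ) - 0 = 0 := rfl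
      rw [h00, hz, stirling_eq_zero h, mul_zero, mul_zero]
  | succ n ih =>
    intro a b
    have e2 : ∑ k ∈ range (n+1), n.choose k * (stirling k a * stirling ((n-k)+1) b)
        = (∑ k ∈ range (n+1), n.choose (k+1) * (stirling (k+1) a * stirling (n-k) b))
          + stirling 0 a * stirling (n+1) b := by
      have h1 : ∑ k ∈ range (n+1), n.choose k * (stirling k a * stirling ((n-k)+1) b)
          = ∑ k ∈ range (n+1), n.choose k * (stirling k a * stirling (n+1-k) b) := by
        refine Finset.sum_congr rfl fun k hk => ?_
        have : (n - k) + 1 = n + 1 - k := by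
          have := Nat.lt_succ_iff.mp (Finset.mem_range.mp hk); omega
        rw [this]
      have h2 : ∑ k ∈ range (n+2), n.choose k * (stirling k a * stirling (n+1-k) b)
          = ∑ k ∈ range (n+1), n.choose k * (stirling k a * stirling (n+1-k) b) := by
        rw [Finset.sum_range_succ, Nat.choose_succ_self, zero_mul, add_zero]
      rw [h1, ← h2, Finset.sum_range_succ']
      simp [Nat.succ_sub_succ]
    have step1 : (∑ k ∈ range (n+1+1), (n+1).choose k * (stirling k a * stirling (n+1-k) b))
        = ∑ k ∈ range (n+1), n.choose k *
            (stirling (k+1) a * stirling (n-k) b + stirling k a * stirling ((n-k)+1) b) := by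
      rw [Finset.sum_range_succ']
      have e1 : ∀ k ∈ range (n+1), (n+1).choose (k+1) * (stirling (k+1) a * stirling (n+1-(k+1)) b)
          = n.choose k * (stirling (k+1) a * stirling (n-k) b)
            + n.choose (k+1) * (stirling (k+1) a * stirling (n-k) b) := by
        intro k _
        rw [Nat.choose_succ_succ, Nat.succ_sub_succ, add_mul]
      rw [Finset.sum_congr rfl e1, Finset.sum_add_distrib, add_assoc]
      have f0 : (n+1).choose 0 * (stirling 0 a * stirling (n+1-0) b)
          = stirling 0 a * stirling (n+1) b := by
        rw [Nat.choose_zero_right, one_mul, Nat.sub_zero]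
      rw [f0, ← e2, ← Finset.sum_add_distrib]
      exact Finset.sum_congr rfl fun k _ => by ring
    rw [step1]
    rcases a with _ | a <;> rcases b with _ | b
    · simp [stirling]
    · have e : ∀ k ∈ range (n+1), n.choose k *
          (stirling (k+1) 0 * stirling (n-k) (b+1) + stirling k 0 * stirling ((n-k)+1) (b+1))
          = (b+1) * (n.choose k * (stirling k 0 * stirling (n-k) (b+1)))
            + n.choose k * (stirling k 0 * stirling (n-k) b) := by
        intro k _; simp [stirling]; ring
      rw [Finset.sum_congr rfl e, Finset.sum_add_distrib, ← Finset.mul_sum, ih, ih]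
      simp [stirling]
    · have e : ∀ k ∈ range (n+1), n.choose k *
          (stirling (k+1) (a+1) * stirling (n-k) 0 + stirling k (a+1) * stirling ((n-k)+1) 0)
          = (a+1) * (n.choose k * (stirling k (a+1) * stirling (n-k) 0))
            + n.choose k * (stirling k a * stirling (n-k) 0) := by
        intro k _; simp [stirling]; ring
      rw [Finset.sum_congr rfl e, Finset.sum_add_distrib, ← Finset.mul_sum, ih, ih]
      simp [stirling]
    · have e : ∀ k ∈ range (n+1), n.choose k *
          (stirling (k+1) (a+1) * stirling (n-k) (b+1) + stirling k (a+1) * stirling ((n-k)+1) (b+1))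
          = (a+1) * (n.choose k * (stirling k (a+1) * stirling (n-k) (b+1)))
            + n.choose k * (stirling k a * stirling (n-k) (b+1))
            + ((b+1) * (n.choose k * (stirling k (a+1) * stirling (n-k) (b+1)))
              + n.choose k * (stirling k (a+1) * stirling (n-k) b)) := by
        intro k _; simp [stirling]; ring
      rw [Finset.sum_congr rfl e, Finset.sum_add_distrib, Finset.sum_add_distrib,
        Finset.sum_add_distrib, ← Finset.mul_sum, ← Finset.mul_sum, ih, ih, ih]
      have h1 : a + 1 + (b + 1) = (a + (b+1)) + 1 := by omega
      have hS : stirling (n+1) ((a+(b+1))+1)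
          = ((a+(b+1))+1) * stirling n ((a+(b+1))+1) + stirling n (a+(b+1)) := rfl
      have hP : ((a+(b+1))+1).choose (a+1) = (a+(b+1)).choose a + (a+(b+1)).choose (a+1) :=
        Nat.choose_succ_succ _ _
      have h4 : (a + 1 + b).choose (a+1) * stirling n (a+1+b)
          = (a + (b+1)).choose (a+1) * stirling n (a+(b+1)) := by
        have : a + 1 + b = a + (b+1) := by omega
        rw [this]
      rw [h1, hS, hP, h4]
      have h5 : a + (b+1) = a + b + 1 := by omega
      rw [h5]
      ring


lemma sum_Iic_prod {M : Type*} [CommSemiring M] (ν : ℕ →₀ ℕ) (g : ℕ → ℕ → M) :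
    ∑ m ∈ Finset.Iic ν, ∏ i ∈ ν.support, g i (m i)
      = ∏ i ∈ ν.support, ∑ k ∈ Finset.range (ν i + 1), g i k := by
  classical
  rw [Finset.prod_sum]
  refine Finset.sum_nbij' (fun m => fun i _ => m i)
    (fun p => Finsupp.indicator ν.support p) ?_ ?_ ?_ ?_ ?_
  · intro m hm
    rw [Finset.mem_pi]
    intro i _
    exact Finset.mem_range.mpr (Nat.lt_succ_of_le (Finsupp.le_def.mp (Finset.mem_Iic.mp hm) i))
  · intro p hp
    rw [Finset.mem_Iic, Finsupp.le_def]
    intro i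
    by_cases hi : i ∈ ν.support
    · rw [Finsupp.indicator_of_mem hi]
      exact Nat.lt_succ_iff.mp (Finset.mem_range.mp (Finset.mem_pi.mp hp i hi))
    · rw [Finsupp.indicator_of_notMem hi]
      exact Nat.zero_le _
  · intro m hm
    ext i
    by_cases hi : i ∈ ν.support
    · rw [Finsupp.indicator_of_mem hi]
    · rw [Finsupp.indicator_of_notMem hi]
      have hsub := Finsupp.support_mono (Finset.mem_Iic.mp hm)
      exact (Finsupp.notMem_support_iff.mp (fun h => hi (hsub h))).symm
  · intro p _
    funext i hi
    exact Finsupp.indicator_of_mem hi _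
  · intro m _
    exact (Finset.prod_attach ν.support (fun i => g i (m i))).symm

lemma mkey (ν w μ : ℕ →₀ ℕ) :
    ∑ m ∈ Finset.Iic ν,
        mchoose ν m * ∏ i ∈ ν.support, (stirling (m i) (w i) * stirling (ν i - m i) (μ i))
      = ∏ i ∈ ν.support, ((w i + μ i).choose (w i) * stirling (ν i) (w i + μ i)) := by
  have h1 : ∀ m ∈ Finset.Iic ν,
      mchoose ν m * ∏ i ∈ ν.support, (stirling (m i) (w i) * stirling (ν i - m i) (μ i))
        = ∏ i ∈ ν.support, ((ν i).choose (m i) * (stirling (m i) (w i) * stirling (ν i - m i) (μ i))) := by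
    intro m _; rw [mchoose, ← Finset.prod_mul_distrib]
  rw [Finset.sum_congr rfl h1,
    sum_Iic_prod ν (fun i k => (ν i).choose k * (stirling k (w i) * stirling (ν i - k) (μ i)))]
  exact Finset.prod_congr rfl fun i _ => key_s17 (ν i) (w i) (μ i)


theorem stmt_17 (A B : (ℕ →₀ ℕ) → ℝ) (ν : ℕ →₀ ℕ) :
    ∑ m ∈ Finset.Iic ν, ∑ w ∈ Finset.Iic m, ∑ μ ∈ Finset.Iic (ν - m),
        (mchoose ν m : ℝ) * A w * B μ *
          ∏ i ∈ ν.support,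
            ((stirling (m i) (w i) * stirling (ν i - m i) (μ i) : ℕ) : ℝ)
      = ∑ m ∈ Finset.Iic ν,
          (∑ w ∈ Finset.Iic m, (mchoose m w : ℝ) * A w * B (m - w)) *
            ∏ i ∈ ν.support, ((stirling (ν i) (m i) : ℕ) : ℝ) := by
  classical
  set s := ν.support with hs
  -- zero lemma for terms
  have hzero : ∀ {m w μ : ℕ →₀ ℕ}, (¬ w ≤ m ∧ w ≤ ν ∨ ¬ μ ≤ ν - m ∧ μ ≤ ν) →
      (mchoose ν m : ℝ) * A w * B μ *
        ∏ i ∈ s, ((stirling (m i) (w i) * stirling (ν i - m i) (μ i) : ℕ) : ℝ) = 0 := by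
    rintro m w μ (⟨hwm, hwv⟩ | ⟨hmu, hmv⟩)
    · obtain ⟨i, hi⟩ : ∃ i, ¬ w i ≤ m i := by
        by_contra h; push_neg at h; exact hwm (Finsupp.le_def.mpr h)
      have his : i ∈ s := Finsupp.mem_support_iff.mpr
        (by have := Finsupp.le_def.mp hwv i; omega)
      have : ((stirling (m i) (w i) * stirling (ν i - m i) (μ i) : ℕ) : ℝ) = 0 := by
        rw [stirling_eq_zero (by omega : m i < w i)]; norm_num
      rw [Finset.prod_eq_zero his this, mul_zero]
    · obtain ⟨i, hi⟩ : ∃ i, ¬ μ i ≤ ν i - m i := by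
        by_contra h; push_neg at h
        exact hmu (Finsupp.le_def.mpr (fun i => by rw [Finsupp.tsub_apply]; exact h i))
      have his : i ∈ s := Finsupp.mem_support_iff.mpr
        (by have := Finsupp.le_def.mp hmv i; omega)
      have : ((stirling (m i) (w i) * stirling (ν i - m i) (μ i) : ℕ) : ℝ) = 0 := by
        rw [stirling_eq_zero (by omega : ν i - m i < μ i)]; norm_num
      rw [Finset.prod_eq_zero his this, mul_zero]
  -- Step A : extend the inner sums to Iic ν
  have stepA : ∀ m ∈ Finset.Iic ν,
      (∑ w ∈ Finset.Iic m, ∑ μ ∈ Finset.Iic (ν - m),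
        (mchoose ν m : ℝ) * A w * B μ *
          ∏ i ∈ s, ((stirling (m i) (w i) * stirling (ν i - m i) (μ i) : ℕ) : ℝ))
      = ∑ w ∈ Finset.Iic ν, ∑ μ ∈ Finset.Iic ν,
        (mchoose ν m : ℝ) * A w * B μ *
          ∏ i ∈ s, ((stirling (m i) (w i) * stirling (ν i - m i) (μ i) : ℕ) : ℝ) := by
    intro m hm
    rw [Finset.mem_Iic] at hm
    rw [Finset.sum_subset (Finset.Iic_subset_Iic.mpr hm)
      (fun w hwv hwm => Finset.sum_eq_zero fun μ _ =>
        hzero (Or.inl ⟨fun h => hwm (Finset.mem_Iic.mpr h), Finset.mem_Iic.mp hwv⟩))]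
    refine Finset.sum_congr rfl fun w _ => ?_
    exact Finset.sum_subset (Finset.Iic_subset_Iic.mpr tsub_le_self)
      (fun μ hmv hmu => hzero (Or.inr ⟨fun h => hmu (Finset.mem_Iic.mpr h), Finset.mem_Iic.mp hmv⟩))
  rw [Finset.sum_congr rfl stepA]
  -- Step B : swap the sums
  rw [Finset.sum_comm]
  have stepB : ∀ w ∈ Finset.Iic ν,
      (∑ m ∈ Finset.Iic ν, ∑ μ ∈ Finset.Iic ν,
        (mchoose ν m : ℝ) * A w * B μ *
          ∏ i ∈ s, ((stirling (m i) (w i) * stirling (ν i - m i) (μ i) : ℕ) : ℝ))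
      = ∑ μ ∈ Finset.Iic ν, ∑ m ∈ Finset.Iic ν,
        (mchoose ν m : ℝ) * A w * B μ *
          ∏ i ∈ s, ((stirling (m i) (w i) * stirling (ν i - m i) (μ i) : ℕ) : ℝ) :=
    fun w _ => Finset.sum_comm
  rw [Finset.sum_congr rfl stepB]
  -- Step C : evaluate the inner sum over m via mkey
  have stepC : ∀ w ∈ Finset.Iic ν, ∀ μ ∈ Finset.Iic ν,
      (∑ m ∈ Finset.Iic ν,
        (mchoose ν m : ℝ) * A w * B μ *
          ∏ i ∈ s, ((stirling (m i) (w i) * stirling (ν i - m i) (μ i) : ℕ) : ℝ))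
      = A w * B μ *
          ((∏ i ∈ s, ((w i + μ i).choose (w i) * stirling (ν i) (w i + μ i)) : ℕ) : ℝ) := by
    intro w _ μ _
    rw [← mkey ν w μ]
    push_cast
    rw [Finset.mul_sum]
    exact Finset.sum_congr rfl fun m _ => by push_cast; ring
  rw [Finset.sum_congr rfl (fun w hw => Finset.sum_congr rfl (stepC w hw))]
  -- Now handle the RHS : shrink and reindex
  have shrink : ∀ w ∈ Finset.Iic ν,
      (∑ μ ∈ Finset.Iic ν, A w * B μ *
          ((∏ i ∈ s, ((w i + μ i).choose (w i) * stirling (ν i) (w i + μ i)) : ℕ) : ℝ))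
      = ∑ μ ∈ Finset.Iic (ν - w), A w * B μ *
          ((∏ i ∈ s, ((w i + μ i).choose (w i) * stirling (ν i) (w i + μ i)) : ℕ) : ℝ) := by
    intro w hw
    rw [Finset.mem_Iic] at hw
    refine (Finset.sum_subset (Finset.Iic_subset_Iic.mpr tsub_le_self) ?_).symm
    intro μ hmv hmu
    rw [Finset.mem_Iic] at hmv
    obtain ⟨i, hi⟩ : ∃ i, ¬ μ i ≤ ν i - w i := by
      by_contra h; push_neg at h
      exact hmu (Finset.mem_Iic.mpr
        (Finsupp.le_def.mpr (fun i => by rw [Finsupp.tsub_apply]; exact h i)))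
    have hwi := Finsupp.le_def.mp hw i
    have hmi := Finsupp.le_def.mp hmv i
    have his : i ∈ s := Finsupp.mem_support_iff.mpr (by omega)
    have hfac : (w i + μ i).choose (w i) * stirling (ν i) (w i + μ i) = 0 := by
      rw [stirling_eq_zero (by omega : ν i < w i + μ i), mul_zero]
    rw [Finset.prod_eq_zero his hfac]
    norm_num
  rw [Finset.sum_congr rfl shrink]
  -- distribute on the RHS
  have rhs_distrib : ∀ m ∈ Finset.Iic ν,
      (∑ w ∈ Finset.Iic m, (mchoose m w : ℝ) * A w * B (m - w)) *
          ∏ i ∈ s, ((stirling (ν i) (m i) : ℕ) : ℝ)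
        = ∑ w ∈ Finset.Iic m, (mchoose m w : ℝ) * A w * B (m - w) *
            ∏ i ∈ s, ((stirling (ν i) (m i) : ℕ) : ℝ) :=
    fun m _ => Finset.sum_mul _ _ _
  rw [Finset.sum_congr rfl rhs_distrib]
  -- reindex : (w, μ) ↦ (w + μ, w)
  rw [Finset.sum_sigma', Finset.sum_sigma']
  refine Finset.sum_nbij' (fun p => ⟨p.1 + p.2, p.1⟩) (fun q => ⟨q.2, q.1 - q.2⟩) ?_ ?_ ?_ ?_ ?_
  · rintro ⟨w, μ⟩ hp
    rw [Finset.mem_sigma] at hp ⊢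
    obtain ⟨h1, h2⟩ := hp
    rw [Finset.mem_Iic] at h1 h2
    constructor
    · rw [Finset.mem_Iic]
      calc w + μ ≤ w + (ν - w) := add_le_add_right h2 w
        _ = ν := add_tsub_cancel_of_le h1
    · rw [Finset.mem_Iic]
      exact le_add_right le_rfl
  · rintro ⟨m, w⟩ hq
    rw [Finset.mem_sigma] at hq ⊢
    obtain ⟨h1, h2⟩ := hq
    rw [Finset.mem_Iic] at h1 h2
    exact ⟨Finset.mem_Iic.mpr (h2.trans h1), Finset.mem_Iic.mpr (tsub_le_tsub_right h1 w)⟩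
  · rintro ⟨w, μ⟩ _
    simp [add_tsub_cancel_left]
  · rintro ⟨m, w⟩ hq
    rw [Finset.mem_sigma] at hq
    obtain ⟨h1, h2⟩ := hq
    rw [Finset.mem_Iic] at h1 h2
    simp [add_tsub_cancel_of_le h2]
  · rintro ⟨w, μ⟩ hp
    rw [Finset.mem_sigma] at hp
    obtain ⟨h1, h2⟩ := hp
    rw [Finset.mem_Iic] at h1 h2
    have hsum : w + μ ≤ ν := by
      calc w + μ ≤ w + (ν - w) := add_le_add_right h2 w
        _ = ν := add_tsub_cancel_of_le h1
    have hBB : (w + μ) - w = μ := add_tsub_cancel_left w μ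
    have hconv : ∏ i ∈ s, (w i + μ i).choose (w i) = ∏ i ∈ s, ((w + μ) i).choose (w i) :=
      Finset.prod_congr rfl fun i _ => by rw [Finsupp.add_apply]
    have hmc : mchoose (w + μ) w = ∏ i ∈ s, (w i + μ i).choose (w i) := by
      rw [mchoose, hconv]
      refine Finset.prod_subset (Finsupp.support_mono hsum) ?_
      intro i _ hi
      have h0 : (w + μ) i = 0 := Finsupp.notMem_support_iff.mp hi
      have hw0 : w i = 0 := by rw [Finsupp.add_apply] at h0; omega
      rw [h0, hw0]
      rfl
    have hst : (∏ i ∈ s, ((stirling (ν i) ((w + μ) i) : ℕ) : ℝ))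
        = ∏ i ∈ s, ((stirling (ν i) (w i + μ i) : ℕ) : ℝ) :=
      Finset.prod_congr rfl fun i _ => by rw [Finsupp.add_apply]
    show A w * B μ * ((∏ i ∈ s, (w i + μ i).choose (w i) * stirling (ν i) (w i + μ i) : ℕ) : ℝ)
      = (mchoose (w + μ) w : ℝ) * A w * B ((w + μ) - w) *
          ∏ i ∈ s, ((stirling (ν i) ((w + μ) i) : ℕ) : ℝ)
    rw [hBB, hmc, hst]
    push_cast
    rw [Finset.prod_mul_distrib]
    ring
end
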